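/- If G is a complete tripartite graph, then the edge set of a smallest side of G is a minimum 𝒯-transversal of G; that is, τ△(G) equals the minimum of |E_AB|, |E_AC|, |E_BC|. -/

import Mathlib

open SimpleGraph

variable {V : Type*}

/-- The set of edges of a triangle, given by its vertex set `t`:
all unordered pairs of distinct vertices of `t`. -/
def triangleEdges (t : Finset V) : Set (Sym2 V) :=
  {e | ∃ u ∈ t, ∃ v ∈ t, u ≠ v ∧ e = s(u, v)}

/-- `E'` is a `𝒯`-transversal of `G`: a set of edges of `G` meeting every triangle of `G`. -/
def IsTriTransversal (G : SimpleGraph V) (E' : Set (Sym2 V)) : Prop :=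
  E' ⊆ G.edgeSet ∧ ∀ t : Finset V, G.IsNClique 3 t → ∃ e ∈ triangleEdges t, e ∈ E'

/-- `τ△ G`: the minimum cardinality of a `𝒯`-transversal of `G`. -/
noncomputable def triTransversalNum (G : SimpleGraph V) : ℕ :=
  sInf {n | ∃ E' : Set (Sym2 V), IsTriTransversal G E' ∧ E'.ncard = n}

/-- `P` is a packing in `G`: a set of triangles of `G` that are pairwise edge-disjoint. -/
def IsTriPacking (G : SimpleGraph V) (P : Set (Finset V)) : Prop :=
  (∀ t ∈ P, G.IsNClique 3 t) ∧
    P.Pairwise fun t t' => Disjoint (triangleEdges t) (triangleEdges t')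

/-- `ν△ G`: the maximum cardinality of a packing of triangles in `G`. -/
noncomputable def triPackingNum (G : SimpleGraph V) : ℕ :=
  sSup {n | ∃ P : Set (Finset V), IsTriPacking G P ∧ P.ncard = n}

/-- The set of edges of `G` with one endpoint in `M` and the other in `W`. -/
def edgesBetween (G : SimpleGraph V) (M W : Set V) : Set (Sym2 V) :=
  {e | e ∈ G.edgeSet ∧ ∃ u ∈ M, ∃ w ∈ W, e = s(u, w)}

/-- `G` is tripartite with parts `A`, `B`, `C`: the vertex set is partitioned into
the three independent sets `A`, `B`, `C`. -/
def IsTripartition (G : SimpleGraph V) (A B C : Set V) : Prop :=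
  A ∪ B ∪ C = Set.univ ∧ Disjoint A B ∧ Disjoint A C ∧ Disjoint B C ∧
    (∀ u ∈ A, ∀ v ∈ A, ¬G.Adj u v) ∧ (∀ u ∈ B, ∀ v ∈ B, ¬G.Adj u v) ∧
    (∀ u ∈ C, ∀ v ∈ C, ¬G.Adj u v)

/-- The side `G[X ∪ Y]` of a tripartite graph is a complete bipartite graph. -/
def CompleteSide (G : SimpleGraph V) (X Y : Set V) : Prop :=
  ∀ x ∈ X, ∀ y ∈ Y, G.Adj x y

/-- `W` is a vertex cover of the subgraph edge-induced by the edge set `Y`. -/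
def CoversEdges (W : Set V) (Y : Set (Sym2 V)) : Prop :=
  ∀ e ∈ Y, ∃ v ∈ W, v ∈ e

/-- `M` is a matching consisting of edges from the edge set `F`:
the edges of `M` are pairwise vertex-disjoint. -/
def IsMatchingIn (F : Set (Sym2 V)) (M : Set (Sym2 V)) : Prop :=
  M ⊆ F ∧ M.Pairwise fun e f => ∀ v, v ∈ e → v ∉ f

lemma no_triangle_in_two (G : SimpleGraph V) {Y Z : Set V}
    (hY : ∀ u ∈ Y, ∀ v ∈ Y, ¬G.Adj u v) (hZ : ∀ u ∈ Z, ∀ v ∈ Z, ¬G.Adj u v)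
    {a b c : V} (hab : G.Adj a b) (hac : G.Adj a c) (hbc : G.Adj b c)
    (ha : a ∈ Y ∨ a ∈ Z) (hb : b ∈ Y ∨ b ∈ Z) (hc : c ∈ Y ∨ c ∈ Z) : False := by
  rcases ha with ha | ha <;> rcases hb with hb | hb <;> rcases hc with hc | hc
  · exact hY a ha b hb hab
  · exact hY a ha b hb hab
  · exact hY a ha c hc hac
  · exact hZ b hb c hc hbc
  · exact hY b hb c hc hbc
  · exact hZ a ha c hc hac
  · exact hZ a ha b hb hab
  · exact hZ a ha b hb hab

lemma side_transversal (G : SimpleGraph V) {X Y Z : Set V}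
    (hcov : ∀ v : V, v ∈ X ∨ v ∈ Y ∨ v ∈ Z) (hdXY : Disjoint X Y)
    (iX : ∀ u ∈ X, ∀ v ∈ X, ¬G.Adj u v) (iY : ∀ u ∈ Y, ∀ v ∈ Y, ¬G.Adj u v)
    (iZ : ∀ u ∈ Z, ∀ v ∈ Z, ¬G.Adj u v) :
    IsTriTransversal G (edgesBetween G X Y) := by
  classical
  refine ⟨fun e he => he.1, fun t ht => ?_⟩
  obtain ⟨a, b, c, hab', hac', hbc', rfl⟩ := Finset.card_eq_three.mp ht.2
  have hcl := ht.1
  have hab : G.Adj a b := hcl (by simp) (by simp) hab'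
  have hac : G.Adj a c := hcl (by simp) (by simp) hac'
  have hbc : G.Adj b c := hcl (by simp) (by simp) hbc'
  have hexX : ∃ v ∈ ({a, b, c} : Finset V), v ∈ X := by
    by_contra h
    push_neg at h
    have ha' : a ∈ Y ∨ a ∈ Z := (hcov a).resolve_left (h a (by simp))
    have hb' : b ∈ Y ∨ b ∈ Z := (hcov b).resolve_left (h b (by simp))
    have hc' : c ∈ Y ∨ c ∈ Z := (hcov c).resolve_left (h c (by simp))
    exact no_triangle_in_two G iY iZ hab hac hbc ha' hb' hc'
  have hexY : ∃ v ∈ ({a, b, c} : Finset V), v ∈ Y := by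
    by_contra h
    push_neg at h
    have hres : ∀ v : V, v ∉ Y → (v ∈ X ∨ v ∈ Z) := by
      intro v hv; rcases hcov v with h1 | h1 | h1 <;> tauto
    have ha' := hres a (h a (by simp))
    have hb' := hres b (h b (by simp))
    have hc' := hres c (h c (by simp))
    exact no_triangle_in_two G iX iZ hab hac hbc ha' hb' hc'
  obtain ⟨u, hu, huX⟩ := hexX
  obtain ⟨v, hv, hvY⟩ := hexY
  have hne : u ≠ v := fun h => Set.disjoint_left.mp hdXY huX (by rw [h]; exact hvY)
  have hadj : G.Adj u v := hcl (Finset.mem_coe.mpr hu) (Finset.mem_coe.mpr hv) hne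
  exact ⟨s(u, v), ⟨u, hu, v, hv, hne, rfl⟩,
    ⟨G.mem_edgeSet.mpr hadj, u, huX, v, hvY, rfl⟩⟩

lemma edgesBetween_comm (G : SimpleGraph V) (M W : Set V) :
    edgesBetween G M W = edgesBetween G W M := by
  ext e
  constructor <;> rintro ⟨he, u, hu, w, hw, rfl⟩ <;>
    exact ⟨he, w, hw, u, hu, Sym2.eq_swap⟩

lemma edgesBetween_disj (G : SimpleGraph V) {P Q R : Set V}
    (hPQ : Disjoint P Q) (hPR : Disjoint P R) :
    Disjoint (edgesBetween G P R) (edgesBetween G Q R) := by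
  rw [Set.disjoint_left]
  rintro e ⟨-, u, hu, v, hv, rfl⟩ ⟨-, u', hu', v', hv', heq⟩
  rcases Sym2.eq_iff.mp heq with ⟨h1, h2⟩ | ⟨h1, h2⟩
  · exact Set.disjoint_left.mp hPQ hu (by rw [h1]; exact hu')
  · exact Set.disjoint_left.mp hPR hu (by rw [h1]; exact hv')

open Classical in
noncomputable def pickE (E' : Set (Sym2 V)) (q : (V × V) × V) : Sym2 V :=
  if s(q.1.1, q.2) ∈ E' then s(q.1.1, q.2) else s(q.1.2, q.2)

lemma key_count (G : SimpleGraph V) [Fintype V] {X Y Z : Set V}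
    (hXY : Disjoint X Y) (hXZ : Disjoint X Z) (hYZ : Disjoint Y Z)
    (cXY : CompleteSide G X Y) (cXZ : CompleteSide G X Z) (cYZ : CompleteSide G Y Z)
    (hx : X.ncard ≤ Z.ncard) (hy : Y.ncard ≤ Z.ncard)
    {E' : Set (Sym2 V)} (hE' : IsTriTransversal G E') :
    (edgesBetween G X Y).ncard ≤ E'.ncard := by
  classical
  rcases Nat.eq_zero_or_pos Z.ncard with hz0 | hzpos
  · have hXe : X = ∅ := by
      have hx0 : X.ncard = 0 := le_antisymm (hz0 ▸ hx) (Nat.zero_le _)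
      exact (Set.ncard_eq_zero (Set.toFinite X)).mp hx0
    have hemp : edgesBetween G X Y = ∅ := by
      ext e
      simp only [edgesBetween, Set.mem_setOf_eq, Set.mem_empty_iff_false, iff_false]
      rintro ⟨-, u, hu, -⟩
      rw [hXe] at hu
      exact hu
    rw [hemp]
    simp
  -- main case
  set exy : Set (Sym2 V) := E' ∩ edgesBetween G X Y with hexy
  set exz : Set (Sym2 V) := E' ∩ edgesBetween G X Z with hexz
  set eyz : Set (Sym2 V) := E' ∩ edgesBetween G Y Z with heyz
  -- disjointness of sides
  have hd1 : Disjoint (edgesBetween G X Y) (edgesBetween G X Z) := by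
    rw [edgesBetween_comm G X Y, edgesBetween_comm G X Z]
    exact edgesBetween_disj G hYZ hXY.symm
  have hd2 : Disjoint (edgesBetween G X Y) (edgesBetween G Y Z) := by
    rw [edgesBetween_comm G Y Z]
    exact edgesBetween_disj G hXZ hXY
  have hd3 : Disjoint (edgesBetween G X Z) (edgesBetween G Y Z) :=
    edgesBetween_disj G hXY hXZ
  have hsum : exy.ncard + exz.ncard + eyz.ncard ≤ E'.ncard := by
    have hdsj12 : Disjoint exy exz :=
      hd1.mono Set.inter_subset_right Set.inter_subset_right
    have hdsj2 : Disjoint (exy ∪ exz) eyz :=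
      Set.disjoint_union_left.mpr
        ⟨hd2.mono Set.inter_subset_right Set.inter_subset_right,
         hd3.mono Set.inter_subset_right Set.inter_subset_right⟩
    have h1 : (exy ∪ exz).ncard = exy.ncard + exz.ncard :=
      Set.ncard_union_eq hdsj12 (Set.toFinite _) (Set.toFinite _)
    have h2 : (exy ∪ exz ∪ eyz).ncard = (exy ∪ exz).ncard + eyz.ncard :=
      Set.ncard_union_eq hdsj2 (Set.toFinite _) (Set.toFinite _)
    have hsub : exy ∪ exz ∪ eyz ⊆ E' :=
      Set.union_subset (Set.union_subset Set.inter_subset_left Set.inter_subset_left)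
        Set.inter_subset_left
    calc exy.ncard + exz.ncard + eyz.ncard = (exy ∪ exz ∪ eyz).ncard := by rw [h2, h1]
      _ ≤ E'.ncard := Set.ncard_le_ncard hsub (Set.toFinite _)
  -- finsets
  set Xf := (Set.toFinite X).toFinset with hXf
  set Yf := (Set.toFinite Y).toFinset with hYf
  set Zf := (Set.toFinite Z).toFinset with hZf
  set pairs : Finset (V × V) := Xf ×ˢ Yf with hpairsdef
  set cov := pairs.filter (fun p => s(p.1, p.2) ∈ E') with hcovdef
  set unc := pairs.filter (fun p => ¬ s(p.1, p.2) ∈ E') with huncdef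
  have hpairs : (edgesBetween G X Y).ncard ≤ pairs.card := by
    rw [Set.ncard_eq_toFinset_card _ (Set.toFinite (edgesBetween G X Y))]
    have hsubim : (Set.toFinite (edgesBetween G X Y)).toFinset ⊆
        pairs.image (fun p : V × V => s(p.1, p.2)) := by
      intro e he
      rw [Set.Finite.mem_toFinset] at he
      obtain ⟨-, u, hu, w, hw, rfl⟩ := he
      exact Finset.mem_image.mpr ⟨(u, w), Finset.mem_product.mpr
        ⟨(Set.Finite.mem_toFinset _).mpr hu, (Set.Finite.mem_toFinset _).mpr hw⟩, rfl⟩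
    calc _ ≤ (pairs.image (fun p : V × V => s(p.1, p.2))).card := Finset.card_le_card hsubim
      _ ≤ pairs.card := Finset.card_image_le
  have hcovsplit : cov.card + unc.card = pairs.card :=
    Finset.card_filter_add_card_filter_not _
  have hcov : cov.card ≤ exy.ncard := by
    rw [Set.ncard_eq_toFinset_card _ (Set.toFinite exy)]
    apply Finset.card_le_card_of_injOn (fun p : V × V => s(p.1, p.2))
    · rintro ⟨u, w⟩ hp
      obtain ⟨hpp, hpE⟩ := Finset.mem_filter.mp hp
      obtain ⟨h1, h2⟩ := Finset.mem_product.mp hpp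
      rw [Set.Finite.mem_toFinset] at h1 h2
      rw [Finset.mem_coe, Set.Finite.mem_toFinset]
      exact ⟨hpE, G.mem_edgeSet.mpr (cXY _ h1 _ h2), u, h1, w, h2, rfl⟩
    · rintro ⟨u, w⟩ hp ⟨u', w'⟩ hp' heq
      obtain ⟨h1, h2⟩ := Finset.mem_product.mp (Finset.mem_filter.mp hp).1
      obtain ⟨h1', h2'⟩ := Finset.mem_product.mp (Finset.mem_filter.mp hp').1
      rw [Set.Finite.mem_toFinset] at h1 h2 h1' h2'
      rcases Sym2.eq_iff.mp heq with ⟨e1, e2⟩ | ⟨e1, e2⟩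
      · simp only [Prod.mk.injEq]
        exact ⟨e1, e2⟩
      · exact absurd h2' (fun hh => Set.disjoint_left.mp hXY h1 (by rw [e1]; exact hh))
  -- triple counting
  set S := unc ×ˢ Zf with hSdef
  set T := (Set.toFinite exz).toFinset ∪ (Set.toFinite eyz).toFinset with hTdef
  have hmaps : ∀ q ∈ S, pickE E' q ∈ T := by
    rintro ⟨⟨u, w⟩, v⟩ hq
    obtain ⟨hun, hv⟩ := Finset.mem_product.mp hq
    obtain ⟨hpp, hnE⟩ := Finset.mem_filter.mp hun
    obtain ⟨huX', hwY'⟩ := Finset.mem_product.mp hpp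
    have huX : u ∈ X := (Set.Finite.mem_toFinset _).mp huX'
    have hwY : w ∈ Y := (Set.Finite.mem_toFinset _).mp hwY'
    have hvZ : v ∈ Z := (Set.Finite.mem_toFinset _).mp hv
    have hnE' : s(u, w) ∉ E' := hnE
    have hclique : G.IsNClique 3 {u, w, v} :=
      is3Clique_triple_iff.mpr ⟨cXY u huX w hwY, cXZ u huX v hvZ, cYZ w hwY v hvZ⟩
    obtain ⟨e, hte, heE⟩ := hE'.2 _ hclique
    obtain ⟨p, hp, q', hq', hpq, rfl⟩ := hte
    simp only [Finset.mem_insert, Finset.mem_singleton] at hp hq'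
    have hor : s(u, v) ∈ E' ∨ s(w, v) ∈ E' := by
      rcases hp with rfl | rfl | rfl
      · rcases hq' with rfl | rfl | rfl
        · exact absurd rfl hpq
        · exact absurd heE hnE'
        · exact Or.inl heE
      · rcases hq' with rfl | rfl | rfl
        · rw [Sym2.eq_swap] at heE
          exact absurd heE hnE'
        · exact absurd rfl hpq
        · exact Or.inr heE
      · rcases hq' with rfl | rfl | rfl
        · rw [Sym2.eq_swap] at heE
          exact Or.inl heE
        · rw [Sym2.eq_swap] at heE
          exact Or.inr heE
        · exact absurd rfl hpq
    show pickE E' ((u, w), v) ∈ T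
    by_cases hcase : s(u, v) ∈ E'
    · have : pickE E' ((u, w), v) = s(u, v) := by
        simp only [pickE]
        rw [if_pos hcase]
      rw [this]
      apply Finset.mem_union_left
      rw [Set.Finite.mem_toFinset]
      exact ⟨hcase, G.mem_edgeSet.mpr (cXZ u huX v hvZ), u, huX, v, hvZ, rfl⟩
    · have : pickE E' ((u, w), v) = s(w, v) := by
        simp only [pickE]
        rw [if_neg hcase]
      rw [this]
      apply Finset.mem_union_right
      rw [Set.Finite.mem_toFinset]
      exact ⟨hor.resolve_left hcase, G.mem_edgeSet.mpr (cYZ w hwY v hvZ), w, hwY, v, hvZ, rfl⟩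
  have hmemS : ∀ q ∈ S, q.1.1 ∈ X ∧ q.1.2 ∈ Y ∧ q.2 ∈ Z := by
    rintro ⟨⟨u, w⟩, v⟩ hq
    obtain ⟨hun, hv⟩ := Finset.mem_product.mp hq
    obtain ⟨hpp, -⟩ := Finset.mem_filter.mp hun
    obtain ⟨huX', hwY'⟩ := Finset.mem_product.mp hpp
    exact ⟨(Set.Finite.mem_toFinset _).mp huX', (Set.Finite.mem_toFinset _).mp hwY',
      (Set.Finite.mem_toFinset _).mp hv⟩
  have hYfZ : Yf.card ≤ Zf.card := by
    rw [← Set.ncard_eq_toFinset_card Y (Set.toFinite Y), ← Set.ncard_eq_toFinset_card Z (Set.toFinite Z)]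
    exact hy
  have hXfZ : Xf.card ≤ Zf.card := by
    rw [← Set.ncard_eq_toFinset_card X (Set.toFinite X), ← Set.ncard_eq_toFinset_card Z (Set.toFinite Z)]
    exact hx
  have hfiber : ∀ e ∈ T, (S.filter (fun q => pickE E' q = e)).card ≤ Zf.card := by
    intro e he
    rcases Finset.mem_union.mp he with he | he
    · rw [Set.Finite.mem_toFinset] at he
      obtain ⟨heE, -, u0, hu0, v0, hv0, rfl⟩ := he
      have hdet : ∀ q ∈ S.filter (fun q => pickE E' q = s(u0, v0)),
          q.1.1 = u0 ∧ q.2 = v0 := by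
        rintro ⟨⟨u, w⟩, v⟩ hq
        obtain ⟨hqS, hfq⟩ := Finset.mem_filter.mp hq
        obtain ⟨huX, hwY, hvZ⟩ := hmemS _ hqS
        simp only [pickE] at hfq
        by_cases hc : s(u, v) ∈ E'
        · rw [if_pos hc] at hfq
          rcases Sym2.eq_iff.mp hfq with ⟨e1, e2⟩ | ⟨e1, e2⟩
          · exact ⟨e1, e2⟩
          · exact absurd hv0 (fun hh =>
              Set.disjoint_left.mp hXZ huX (by rw [e1]; exact hh))
        · rw [if_neg hc] at hfq
          rcases Sym2.eq_iff.mp hfq with ⟨e1, e2⟩ | ⟨e1, e2⟩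
          · exact absurd hu0 (fun hh =>
              Set.disjoint_left.mp hXY hh (by rw [← e1]; exact hwY))
          · exact absurd hv0 (fun hh =>
              Set.disjoint_left.mp hYZ hwY (by rw [e1]; exact hh))
      calc (S.filter (fun q => pickE E' q = s(u0, v0))).card ≤ Yf.card := by
            apply Finset.card_le_card_of_injOn (fun q : (V × V) × V => q.1.2)
            · rintro ⟨⟨u, w⟩, v⟩ hq
              have := (hmemS _ (Finset.mem_filter.mp hq).1).2.1
              exact (Set.Finite.mem_toFinset _).mpr this
            · rintro ⟨⟨u, w⟩, v⟩ hq ⟨⟨u', w'⟩, v'⟩ hq' hh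
              obtain ⟨d1, d2⟩ := hdet _ hq
              obtain ⟨d1', d2'⟩ := hdet _ hq'
              simp only at d1 d2 d1' d2' hh
              simp only [Prod.mk.injEq]
              exact ⟨⟨d1.trans d1'.symm, hh⟩, d2.trans d2'.symm⟩
        _ ≤ Zf.card := hYfZ
    · rw [Set.Finite.mem_toFinset] at he
      obtain ⟨heE, -, u0, hu0, v0, hv0, rfl⟩ := he
      have hdet : ∀ q ∈ S.filter (fun q => pickE E' q = s(u0, v0)),
          q.1.2 = u0 ∧ q.2 = v0 := by
        rintro ⟨⟨u, w⟩, v⟩ hq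
        obtain ⟨hqS, hfq⟩ := Finset.mem_filter.mp hq
        obtain ⟨huX, hwY, hvZ⟩ := hmemS _ hqS
        simp only [pickE] at hfq
        by_cases hc : s(u, v) ∈ E'
        · rw [if_pos hc] at hfq
          rcases Sym2.eq_iff.mp hfq with ⟨e1, e2⟩ | ⟨e1, e2⟩
          · exact absurd hu0 (fun hh =>
              Set.disjoint_left.mp hXY huX (by rw [e1]; exact hh))
          · exact absurd hv0 (fun hh =>
              Set.disjoint_left.mp hXZ huX (by rw [e1]; exact hh))
        · rw [if_neg hc] at hfq
          rcases Sym2.eq_iff.mp hfq with ⟨e1, e2⟩ | ⟨e1, e2⟩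
          · exact ⟨e1, e2⟩
          · exact absurd hv0 (fun hh =>
              Set.disjoint_left.mp hYZ hwY (by rw [e1]; exact hh))
      calc (S.filter (fun q => pickE E' q = s(u0, v0))).card ≤ Xf.card := by
            apply Finset.card_le_card_of_injOn (fun q : (V × V) × V => q.1.1)
            · rintro ⟨⟨u, w⟩, v⟩ hq
              have := (hmemS _ (Finset.mem_filter.mp hq).1).1
              exact (Set.Finite.mem_toFinset _).mpr this
            · rintro ⟨⟨u, w⟩, v⟩ hq ⟨⟨u', w'⟩, v'⟩ hq' hh
              obtain ⟨d1, d2⟩ := hdet _ hq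
              obtain ⟨d1', d2'⟩ := hdet _ hq'
              simp only at d1 d2 d1' d2' hh
              simp only [Prod.mk.injEq]
              exact ⟨⟨hh, d1.trans d1'.symm⟩, d2.trans d2'.symm⟩
        _ ≤ Zf.card := hXfZ
  have hScard : S.card ≤ Zf.card * T.card :=
    Finset.card_le_mul_card_image_of_maps_to hmaps Zf.card hfiber
  have hSprod : S.card = unc.card * Zf.card := Finset.card_product _ _
  have hT : T.card ≤ exz.ncard + eyz.ncard := by
    calc T.card ≤ (Set.toFinite exz).toFinset.card + (Set.toFinite eyz).toFinset.card :=
          Finset.card_union_le _ _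
      _ = exz.ncard + eyz.ncard := by
          rw [← Set.ncard_eq_toFinset_card exz (Set.toFinite exz),
            ← Set.ncard_eq_toFinset_card eyz (Set.toFinite eyz)]
  have hZpos : 0 < Zf.card := by
    rw [← Set.ncard_eq_toFinset_card Z (Set.toFinite Z)]
    exact hzpos
  have huncb : unc.card ≤ exz.ncard + eyz.ncard := by
    have h1 : unc.card * Zf.card ≤ (exz.ncard + eyz.ncard) * Zf.card := by
      calc unc.card * Zf.card = S.card := hSprod.symm
        _ ≤ Zf.card * T.card := hScard
        _ ≤ Zf.card * (exz.ncard + eyz.ncard) := Nat.mul_le_mul_left _ hT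
        _ = (exz.ncard + eyz.ncard) * Zf.card := Nat.mul_comm _ _
    exact Nat.le_of_mul_le_mul_right h1 hZpos
  calc (edgesBetween G X Y).ncard ≤ pairs.card := hpairs
    _ = cov.card + unc.card := hcovsplit.symm
    _ ≤ exy.ncard + (exz.ncard + eyz.ncard) := Nat.add_le_add hcov huncb
    _ = exy.ncard + exz.ncard + eyz.ncard := (Nat.add_assoc _ _ _).symm
    _ ≤ E'.ncard := hsum

/-- If `G` is a complete tripartite graph, then the edge set of each side is a
`𝒯`-transversal of `G`, and `τ△(G)` equals the minimum of `|E_AB|`, `|E_AC|` and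
`|E_BC|`; in particular the edge set of a smallest side is a minimum
`𝒯`-transversal of `G`. -/
theorem smallest_side_min_transversal_of_completeTripartite [Fintype V]
    (G : SimpleGraph V) (A B C : Set V) (hpart : IsTripartition G A B C)
    (hAB : CompleteSide G A B) (hAC : CompleteSide G A C)
    (hBC : CompleteSide G B C) :
    IsTriTransversal G (edgesBetween G A B) ∧
      IsTriTransversal G (edgesBetween G A C) ∧
      IsTriTransversal G (edgesBetween G B C) ∧
      triTransversalNum G =
        min (edgesBetween G A B).ncard
          (min (edgesBetween G A C).ncard (edgesBetween G B C).ncard) := by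
  obtain ⟨huniv, dAB, dAC, dBC, iA, iB, iC⟩ := hpart
  have hcov : ∀ v : V, v ∈ A ∨ v ∈ B ∨ v ∈ C := by
    intro v
    have hv : v ∈ A ∪ B ∪ C := huniv ▸ Set.mem_univ v
    rcases hv with (h | h) | h <;> tauto
  have T1 : IsTriTransversal G (edgesBetween G A B) :=
    side_transversal G hcov dAB iA iB iC
  have T2 : IsTriTransversal G (edgesBetween G A C) :=
    side_transversal G (fun v => by rcases hcov v with h | h | h <;> tauto) dAC iA iC iB
  have T3 : IsTriTransversal G (edgesBetween G B C) :=
    side_transversal G (fun v => by rcases hcov v with h | h | h <;> tauto) dBC iB iC iA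
  refine ⟨T1, T2, T3, le_antisymm ?_ ?_⟩
  · have h1 : triTransversalNum G ≤ (edgesBetween G A B).ncard :=
      Nat.sInf_le ⟨edgesBetween G A B, T1, rfl⟩
    have h2 : triTransversalNum G ≤ (edgesBetween G A C).ncard :=
      Nat.sInf_le ⟨edgesBetween G A C, T2, rfl⟩
    have h3 : triTransversalNum G ≤ (edgesBetween G B C).ncard :=
      Nat.sInf_le ⟨edgesBetween G B C, T3, rfl⟩
    exact le_min h1 (le_min h2 h3)
  · have hne : {n | ∃ E' : Set (Sym2 V), IsTriTransversal G E' ∧ E'.ncard = n}.Nonempty :=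
      ⟨(edgesBetween G A B).ncard, edgesBetween G A B, T1, rfl⟩
    apply le_csInf hne
    rintro n ⟨E', hE', rfl⟩
    have hchoice : (A.ncard ≤ C.ncard ∧ B.ncard ≤ C.ncard) ∨
        (B.ncard ≤ A.ncard ∧ C.ncard ≤ A.ncard) ∨
        (A.ncard ≤ B.ncard ∧ C.ncard ≤ B.ncard) := by omega
    rcases hchoice with ⟨h1, h2⟩ | ⟨h1, h2⟩ | ⟨h1, h2⟩
    · exact le_trans (min_le_left _ _)
        (key_count G dAB dAC dBC hAB hAC hBC h1 h2 hE')
    · have hk := key_count G dBC dAB.symm dAC.symm hBC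
        (fun b hb a ha => (hAB a ha b hb).symm)
        (fun c hc a ha => (hAC a ha c hc).symm) h1 h2 hE'
      exact le_trans (le_trans (min_le_right _ _) (min_le_right _ _)) hk
    · have hk := key_count G dAC dAB dBC.symm hAC hAB
        (fun c hc b hb => (hBC b hb c hc).symm) h1 h2 hE'
      exact le_trans (le_trans (min_le_right _ _) (min_le_left _ _)) hk
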